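/- The set of zeros of Q in the right half-plane, {s ∈ ℂ : Re(s) > 0 and Q(s) = 0}, is infinite. -/

import Mathlib

/-- `Q(s) = 1 - 2∑_{k≥1} exp(-s√(k(k+2))/2)`. -/
noncomputable def Qfun (s : ℂ) : ℂ :=
  1 - 2 * ∑' k : ℕ,
    Complex.exp (-(s * (Real.sqrt (((k : ℝ) + 1) * (((k : ℝ) + 1) + 2)) : ℂ) / 2))

namespace StQ14
open Complex Metric

noncomputable def cc (k : ℕ) : ℝ := Real.sqrt (((k : ℝ) + 1) * (((k : ℝ) + 1) + 2))

lemma cc_nonneg (k : ℕ) : 0 ≤ cc k := Real.sqrt_nonneg _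

lemma cc_ge (k : ℕ) : (k : ℝ) + 1 ≤ cc k := by
  rw [cc, show ((k:ℝ)+1) * (((k:ℝ)+1)+2) = ((k:ℝ)+1)*((k:ℝ)+1) + 2*((k:ℝ)+1) by ring]
  nlinarith [Real.sq_sqrt (by positivity : (0:ℝ) ≤ ((k:ℝ)+1)*((k:ℝ)+1) + 2*((k:ℝ)+1)),
    Real.sqrt_nonneg (((k:ℝ)+1)*((k:ℝ)+1) + 2*((k:ℝ)+1))]

noncomputable def term (s : ℂ) (k : ℕ) : ℂ := Complex.exp (-(s * (cc k : ℂ) / 2))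

lemma Qfun_eq (s : ℂ) : (1 - 2 * ∑' k : ℕ,
    Complex.exp (-(s * (Real.sqrt (((k : ℝ) + 1) * (((k : ℝ) + 1) + 2)) : ℂ) / 2)))
    = 1 - 2 * ∑' k, term s k := rfl

lemma norm_term (s : ℂ) (k : ℕ) : ‖term s k‖ = Real.exp (-(s.re * cc k / 2)) := by
  rw [term, Complex.norm_exp]
  congr 1
  simp [Complex.div_re, Complex.normSq, Complex.mul_re]

lemma norm_term_le {a : ℝ} (ha : 0 ≤ a) {s : ℂ} (hs : a ≤ s.re) (k : ℕ) :
    ‖term s k‖ ≤ Real.exp (-(a / 2)) ^ (k + 1) := by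
  rw [norm_term, ← Real.exp_nat_mul]
  apply Real.exp_le_exp.2
  have h1 : a * ((k:ℝ)+1) ≤ s.re * cc k := by
    have := cc_ge k
    have h0 : (0:ℝ) ≤ (k:ℝ)+1 := by positivity
    nlinarith [cc_nonneg k]
  push_cast
  nlinarith

lemma summable_pow {a : ℝ} (ha : 0 < a) : Summable (fun k : ℕ => Real.exp (-(a / 2)) ^ (k + 1)) := by
  have h : Real.exp (-(a/2)) < 1 := Real.exp_lt_one_iff.2 (by linarith)
  have h0 : 0 ≤ Real.exp (-(a/2)) := (Real.exp_pos _).le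
  have := summable_geometric_of_lt_one h0 h
  simpa [pow_succ, mul_comm] using this.mul_left (Real.exp (-(a/2)))

lemma summable_term {s : ℂ} (hs : 0 < s.re) : Summable (term s) := by
  apply Summable.of_norm
  exact Summable.of_nonneg_of_le (fun k => norm_nonneg _)
    (fun k => norm_term_le hs.le le_rfl k) (summable_pow hs)

lemma diffOn_halfplane {a : ℝ} (ha : 0 < a) :
    DifferentiableOn ℂ Qfun {s : ℂ | a < s.re} := by
  have hopen : IsOpen {s : ℂ | a < s.re} := isOpen_lt continuous_const Complex.continuous_re
  have h : DifferentiableOn ℂ (fun s : ℂ => ∑' k, term s k) {s : ℂ | a < s.re} := by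
    apply differentiableOn_tsum_of_summable_norm (summable_pow ha)
    · intro k
      apply Differentiable.differentiableOn
      apply Complex.differentiable_exp.comp
      fun_prop
    · exact hopen
    · intro k w hw
      exact norm_term_le ha.le (le_of_lt hw) k
  intro s hs
  have : Qfun = fun s => 1 - 2 * ∑' k, term s k := rfl
  rw [this]
  exact (differentiableOn_const 1 |>.sub ((differentiableOn_const 2).mul h)) s hs

noncomputable def Qr (σ : ℝ) : ℝ := 1 - 2 * ∑' k : ℕ, Real.exp (-(σ * cc k / 2))

lemma term_ofReal (σ : ℝ) (k : ℕ) : term (σ : ℂ) k = ((Real.exp (-(σ * cc k / 2)) : ℝ) : ℂ) := by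
  rw [term, Complex.ofReal_exp]
  norm_num

lemma Qfun_ofReal (σ : ℝ) : Qfun (σ : ℂ) = ((Qr σ : ℝ) : ℂ) := by
  have : Qfun (σ : ℂ) = 1 - 2 * ∑' k, term (σ:ℂ) k := rfl
  have ht : ∑' k, term (σ:ℂ) k = ((∑' k : ℕ, Real.exp (-(σ * cc k / 2)) : ℝ) : ℂ) := by
    rw [Complex.ofReal_tsum]
    exact tsum_congr fun k => term_ofReal σ k
  rw [this, ht, Qr]
  push_cast
  ring

lemma summable_Qr {σ : ℝ} (hσ : 0 < σ) : Summable (fun k : ℕ => Real.exp (-(σ * cc k / 2))) := by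
  have := summable_term (s := (σ:ℂ)) (by simpa using hσ)
  have h2 : Summable (fun k : ℕ => ((Real.exp (-(σ * cc k / 2)) : ℝ) : ℂ)) := by
    rw [funext (term_ofReal σ)] at this; exact this
  exact Complex.summable_ofReal.1 h2

lemma sqrt3_lt_2 : Real.sqrt 3 < 2 := by
  rw [show (2:ℝ) = Real.sqrt 4 by rw [show (4:ℝ) = 2^2 by norm_num, Real.sqrt_sq]; norm_num]
  exact Real.sqrt_lt_sqrt (by norm_num) (by norm_num)

lemma exp_half_lt_2 : Real.exp (1/2) < 2 := by
  have h := Real.exp_one_lt_d9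
  have h2 : Real.exp (1/2) * Real.exp (1/2) = Real.exp 1 := by
    rw [← Real.exp_add]; norm_num
  nlinarith [Real.exp_pos (1/2 : ℝ)]

lemma Qr_half_neg : Qr (1/2) < 0 := by
  have hsum := summable_Qr (σ := 1/2) (by norm_num)
  have h0 : Real.exp (-(1/2 * cc 0 / 2)) ≤ ∑' k : ℕ, Real.exp (-(1/2 * cc k / 2)) :=
    Summable.le_tsum hsum 0 (fun i _ => (Real.exp_pos _).le)
  have hc0 : cc 0 = Real.sqrt 3 := by
    rw [cc]; norm_num
  have h1 : (1:ℝ)/2 < Real.exp (-(1/2 * cc 0 / 2)) := by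
    rw [hc0]
    have : Real.exp (1/2 * Real.sqrt 3 / 2) < 2 := by
      calc Real.exp (1/2 * Real.sqrt 3 / 2) ≤ Real.exp (1/2) := by
            apply Real.exp_le_exp.2
            nlinarith [sqrt3_lt_2, Real.sqrt_nonneg 3]
        _ < 2 := exp_half_lt_2
    rw [Real.exp_neg]
    rw [lt_inv_comm₀] <;> [skip; norm_num; positivity]
    linarith
  rw [Qr]
  linarith

lemma exp_neg_two_le : Real.exp (-2 : ℝ) ≤ 1/4 := by
  have h := Real.exp_one_gt_d9
  have h2 : Real.exp 2 = Real.exp 1 * Real.exp 1 := by rw [← Real.exp_add]; norm_num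
  rw [Real.exp_neg]
  rw [inv_le_comm₀ (Real.exp_pos _) (by norm_num)]
  nlinarith

lemma Qr_four_pos : 0 < Qr 4 := by
  have hsum := summable_Qr (σ := 4) (by norm_num)
  have hsum2 : Summable (fun k : ℕ => ((1:ℝ)/4) ^ (k+1)) := by
    have := summable_geometric_of_lt_one (by norm_num : (0:ℝ) ≤ 1/4) (by norm_num)
    simpa [pow_succ, mul_comm] using this.mul_left (1/4 : ℝ)
  have hle : ∀ k : ℕ, Real.exp (-(4 * cc k / 2)) ≤ ((1:ℝ)/4) ^ (k+1) := by
    intro k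
    calc Real.exp (-(4 * cc k / 2)) ≤ Real.exp ((-2:ℝ) * ((k:ℝ)+1)) := by
          apply Real.exp_le_exp.2
          nlinarith [cc_ge k, cc_nonneg k]
      _ = Real.exp (-2:ℝ) ^ (k+1) := by
          rw [← Real.exp_nat_mul]; push_cast; ring_nf
      _ ≤ ((1:ℝ)/4) ^ (k+1) := by
          apply pow_le_pow_left₀ (Real.exp_pos _).le exp_neg_two_le
  have h2 : ∑' k : ℕ, Real.exp (-(4 * cc k / 2)) ≤ ∑' k : ℕ, ((1:ℝ)/4) ^ (k+1) :=
    Summable.tsum_le_tsum hle hsum hsum2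
  have h3 : ∑' k : ℕ, ((1:ℝ)/4) ^ (k+1) = 1/3 := by
    have : ∑' k : ℕ, ((1:ℝ)/4) ^ (k+1) = (1/4) * ∑' k : ℕ, ((1:ℝ)/4) ^ k := by
      rw [← tsum_mul_left]
      exact tsum_congr fun k => by ring
    rw [this, tsum_geometric_of_lt_one (by norm_num) (by norm_num)]
    norm_num
  rw [Qr]
  linarith

lemma exists_zero : ∃ σ₀ : ℝ, σ₀ ∈ Set.Icc (1/2 : ℝ) 4 ∧ Qfun (σ₀ : ℂ) = 0 := by
  have hcont : ContinuousOn (fun σ : ℝ => Qr σ) (Set.Icc (1/2 : ℝ) 4) := by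
    have h1 : ContinuousOn Qfun {s : ℂ | (1:ℝ)/4 < s.re} :=
      (diffOn_halfplane (by norm_num : (0:ℝ) < 1/4)).continuousOn
    have h2 : ContinuousOn (fun σ : ℝ => Qfun (σ:ℂ)) (Set.Icc (1/2 : ℝ) 4) := by
      apply h1.comp Complex.continuous_ofReal.continuousOn
      intro σ hσ
      simp only [Set.mem_setOf_eq, Complex.ofReal_re]
      linarith [hσ.1]
    have h3 : ContinuousOn (fun σ : ℝ => (Qfun (σ:ℂ)).re) (Set.Icc (1/2 : ℝ) 4) :=
      Complex.continuous_re.comp_continuousOn h2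
    apply h3.congr
    intro σ _
    simp only [Qfun_ofReal, Complex.ofReal_re]
  have := intermediate_value_Icc (by norm_num : (1/2:ℝ) ≤ 4) hcont
  have h0 : (0:ℝ) ∈ Set.Icc (Qr (1/2)) (Qr 4) := ⟨Qr_half_neg.le, Qr_four_pos.le⟩
  obtain ⟨σ₀, hσ₀, hQ⟩ := this h0
  exact ⟨σ₀, hσ₀, by rw [Qfun_ofReal]; exact_mod_cast hQ⟩

lemma fract_box {M' : ℕ} (x y : ℝ) (h : ⌊Int.fract x * M'⌋ = ⌊Int.fract y * M'⌋) (hM : 0 < M') :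
    |Int.fract x - Int.fract y| < 1 / M' := by
  have hMpos : (0:ℝ) < M' := by exact_mod_cast hM
  have h1 : Int.fract x * M' < ⌊Int.fract x * M'⌋ + 1 := Int.lt_floor_add_one _
  have h2 : (⌊Int.fract x * M'⌋ : ℝ) ≤ Int.fract x * M' := Int.floor_le _
  have h3 : Int.fract y * M' < ⌊Int.fract y * M'⌋ + 1 := Int.lt_floor_add_one _
  have h4 : (⌊Int.fract y * M'⌋ : ℝ) ≤ Int.fract y * M' := Int.floor_le _
  rw [h] at h1 h2
  have h5 : (Int.fract x - Int.fract y) * M' < 1 := by nlinarith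
  have h6 : (Int.fract y - Int.fract x) * M' < 1 := by nlinarith
  rw [abs_lt]
  constructor
  · linarith [(lt_div_iff₀ hMpos).2 h6]
  · linarith [(lt_div_iff₀ hMpos).2 h5]

lemma exists_simul (N : ℕ) (θ : ℕ → ℝ) {δ T : ℝ} (hδ : 0 < δ) (hT : 0 < T) :
    ∃ τ : ℝ, T ≤ τ ∧ ∀ k < N, ∃ n : ℤ, |τ * θ k - n| < δ := by
  obtain ⟨M, hM⟩ := exists_nat_one_div_lt hδ
  set M' := M + 1 with hM'
  have hM'pos : 0 < M' := Nat.succ_pos _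
  have hMpos : (0:ℝ) < (M' : ℝ) := by exact_mod_cast hM'pos
  have hbox : ∀ x : ℝ, (⌊Int.fract x * M'⌋).toNat < M' := by
    intro x
    have h1 : Int.fract x * M' < M' := by
      have := Int.fract_lt_one x
      nlinarith [Int.fract_nonneg x]
    have h2 : (0:ℤ) ≤ ⌊Int.fract x * M'⌋ :=
      Int.floor_nonneg.2 (mul_nonneg (Int.fract_nonneg x) hMpos.le)
    have h3 : ⌊Int.fract x * M'⌋ < (M' : ℤ) := by
      rw [Int.floor_lt]; exact_mod_cast h1
    omega
  set F : Fin (M' ^ N + 1) → (Fin N → Fin M') := fun j k =>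
    ⟨(⌊Int.fract ((j : ℝ) * T * θ k) * M'⌋).toNat, hbox _⟩ with hF
  have hcard : Fintype.card (Fin N → Fin M') < Fintype.card (Fin (M' ^ N + 1)) := by
    simp [Fintype.card_fun]
  obtain ⟨j₁, j₂, hne, heq⟩ := Fintype.exists_ne_map_eq_of_card_lt F hcard
  have key : ∀ i₁ i₂ : Fin (M' ^ N + 1), (i₁ : ℕ) < (i₂ : ℕ) → F i₁ = F i₂ →
      ∃ τ : ℝ, T ≤ τ ∧ ∀ k < N, ∃ n : ℤ, |τ * θ k - n| < δ := by
    intro i₁ i₂ hlt heq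
    refine ⟨(((i₂ : ℕ) : ℝ) - ((i₁ : ℕ) : ℝ)) * T, ?_, ?_⟩
    · have h1 : (1:ℝ) ≤ ((i₂ : ℕ) : ℝ) - ((i₁ : ℕ) : ℝ) := by
        have : (i₁ : ℕ) + 1 ≤ (i₂ : ℕ) := hlt
        have := Nat.cast_le (α := ℝ) |>.2 this
        push_cast at this
        linarith
      nlinarith
    · intro k hk
      set x₁ := ((i₁ : ℕ) : ℝ) * T * θ k with hx₁
      set x₂ := ((i₂ : ℕ) : ℝ) * T * θ k with hx₂
      refine ⟨⌊x₂⌋ - ⌊x₁⌋, ?_⟩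
      have hfr : ⌊Int.fract x₁ * M'⌋ = ⌊Int.fract x₂ * M'⌋ := by
        have := congrFun heq ⟨k, hk⟩
        simp [hF] at this
        rw [← hx₁, ← hx₂] at this
        have h2 : (0:ℤ) ≤ ⌊Int.fract x₁ * M'⌋ :=
          Int.floor_nonneg.2 (mul_nonneg (Int.fract_nonneg _) hMpos.le)
        have h3 : (0:ℤ) ≤ ⌊Int.fract x₂ * M'⌋ :=
          Int.floor_nonneg.2 (mul_nonneg (Int.fract_nonneg _) hMpos.le)
        omega
      have hbd := fract_box x₁ x₂ hfr hM'pos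
      have e1 : (((i₂ : ℕ) : ℝ) - ((i₁ : ℕ) : ℝ)) * T * θ k - ((⌊x₂⌋ : ℝ) - (⌊x₁⌋ : ℝ))
          = Int.fract x₂ - Int.fract x₁ := by
        simp only [Int.fract, hx₁, hx₂]
        push_cast
        ring
      calc |(((i₂ : ℕ) : ℝ) - ((i₁ : ℕ) : ℝ)) * T * θ k - ((⌊x₂⌋ - ⌊x₁⌋ : ℤ) : ℝ)|
          = |Int.fract x₂ - Int.fract x₁| := by push_cast; rw [e1]
        _ < 1 / M' := by rw [abs_sub_comm]; exact hbd
        _ < δ := by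
            rw [hM']
            push_cast
            exact hM
  rcases hne.lt_or_gt with hlt | hlt
  · exact key j₁ j₂ hlt heq
  · exact key j₂ j₁ hlt heq.symm

lemma Qfun_term (s : ℂ) : Qfun s = 1 - 2 * ∑' k, term s k := rfl

lemma term_translate (s : ℂ) (τ : ℝ) (k : ℕ) :
    term (s + (τ : ℂ) * I) k = term s k * Complex.exp (-((τ : ℂ) * I * (cc k : ℂ) / 2)) := by
  rw [term, term, ← Complex.exp_add]
  congr 1
  ring

lemma norm_exp_factor {τ : ℝ} {k : ℕ} {n : ℤ} {δ : ℝ} (hδ : 0 < δ)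
    (hn : |τ * (cc k / (4 * Real.pi)) - n| < δ) (hδ1 : 4 * Real.pi * δ ≤ 1) :
    ‖Complex.exp (-((τ : ℂ) * I * (cc k : ℂ) / 2)) - 1‖ ≤ 8 * Real.pi * δ := by
  set u : ℝ := τ * cc k / 2 - 2 * Real.pi * n with hu
  have hπ : (0:ℝ) < Real.pi := Real.pi_pos
  have hu_bound : |u| ≤ 4 * Real.pi * δ := by
    have h2 : τ * cc k / 2 - 2 * Real.pi * n = (2 * Real.pi) * (τ * (cc k / (4 * Real.pi)) - n) := by
      field_simp
      ring
    rw [hu, h2, abs_mul, abs_of_pos (show (0:ℝ) < 2 * Real.pi by positivity)]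
    nlinarith [abs_nonneg (τ * (cc k / (4 * Real.pi)) - (n:ℝ))]
  have hexp : Complex.exp (-((τ : ℂ) * I * (cc k : ℂ) / 2))
      = Complex.exp ((-u : ℝ) * I) := by
    have : -((τ : ℂ) * I * (cc k : ℂ) / 2) = ((-u : ℝ) : ℂ) * I + (-n : ℤ) * (2 * (Real.pi : ℂ) * I) := by
      push_cast [hu]
      ring
    rw [this, Complex.exp_add, Complex.exp_int_mul_two_pi_mul_I, mul_one]
  rw [hexp]
  have habs : ‖(((-u : ℝ) : ℂ) * I)‖ = |u| := by
    simp
  have h3 : ‖(((-u : ℝ) : ℂ) * I)‖ ≤ 1 := by rw [habs]; linarith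
  have h4 := Complex.norm_exp_sub_one_le h3
  rw [habs] at h4
  linarith

set_option maxHeartbeats 1000000 in
lemma key_translate {a ε T : ℝ} (ha : 0 < a) (hε : 0 < ε) (hT : 0 < T) :
    ∃ τ : ℝ, T ≤ τ ∧ ∀ s : ℂ, a ≤ s.re → ‖Qfun (s + (τ:ℂ) * I) - Qfun s‖ < ε := by
  have hπ : (0:ℝ) < Real.pi := Real.pi_pos
  set ρ := Real.exp (-(a/2)) with hρ
  have hρ0 : 0 < ρ := Real.exp_pos _
  have hρ1 : ρ < 1 := Real.exp_lt_one_iff.2 (by linarith)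
  have hCsum : Summable (fun k : ℕ => ρ ^ (k+1)) := summable_pow ha
  obtain ⟨C, hC⟩ : ∃ C : ℝ, C = ∑' k : ℕ, ρ ^ (k+1) := ⟨_, rfl⟩
  have hC0 : 0 ≤ C := hC ▸ tsum_nonneg (fun k => by positivity)
  obtain ⟨N, hN⟩ : ∃ N : ℕ, ρ ^ N < ε / (16 * (C+1)) :=
    exists_pow_lt_of_lt_one (by positivity) hρ1
  have hρN : ρ ^ N * (4 * C) < ε / 4 := by
    have h1 : ρ ^ N * (16 * (C+1)) < ε := by
      rw [lt_div_iff₀ (by positivity : (0:ℝ) < 16*(C+1))] at hN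
      exact hN
    nlinarith [pow_pos hρ0 N]
  set δ := min (ε/(64*Real.pi*(N+1))) (1/(8*Real.pi)) with hδdef
  have hδ0 : 0 < δ := lt_min (by positivity) (by positivity)
  have hδ1 : 4 * Real.pi * δ ≤ 1 := by
    have h1 : δ ≤ 1/(8*Real.pi) := min_le_right _ _
    have h2 : δ * (8*Real.pi) ≤ 1 := by
      exact (le_div_iff₀ (by positivity : (0:ℝ) < 8*Real.pi)).1 h1
    nlinarith [hδ0.le]
  have hδ2 : δ ≤ ε/(64*Real.pi*(N+1)) := min_le_left _ _
  obtain ⟨τ, hτT, hsim⟩ := exists_simul N (fun k => cc k / (4 * Real.pi)) hδ0 hT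
  refine ⟨τ, hτT, ?_⟩
  intro s hs
  have hs0 : 0 < s.re := lt_of_lt_of_le ha hs
  have hre : (s + (τ:ℂ) * I).re = s.re := by simp
  have hs0' : 0 < (s + (τ:ℂ) * I).re := by rw [hre]; exact hs0
  have hA := summable_term hs0'
  have hB := summable_term hs0
  set d : ℕ → ℂ := fun k => term s k * (Complex.exp (-((τ:ℂ) * I * (cc k : ℂ) / 2)) - 1) with hd
  have h1 : ∑' k, term (s + (τ:ℂ)*I) k - ∑' k, term s k = ∑' k, d k := by
    rw [← Summable.tsum_sub hA hB]
    exact tsum_congr (fun k => by rw [term_translate]; ring)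
  have hdiff : Qfun (s + (τ:ℂ)*I) - Qfun s = -2 * ∑' k, d k := by
    rw [Qfun_term, Qfun_term, ← h1]
    ring
  have hE1 : ∀ k, ‖(Complex.exp (-((τ:ℂ) * I * (cc k : ℂ) / 2)))‖ = 1 := by
    intro k
    have : -((τ:ℂ) * I * (cc k : ℂ) / 2) = ((-(τ * cc k / 2) : ℝ) : ℂ) * I := by
      push_cast
      ring
    rw [this, Complex.norm_exp_ofReal_mul_I]
  have hnorm_d : ∀ k, ‖d k‖ ≤ 2 * ρ ^ (k+1) := by
    intro k
    rw [hd]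
    have h2 : ‖Complex.exp (-((τ:ℂ) * I * (cc k : ℂ) / 2)) - 1‖ ≤ 2 := by
      calc ‖Complex.exp (-((τ:ℂ) * I * (cc k : ℂ) / 2)) - 1‖
          ≤ ‖Complex.exp (-((τ:ℂ) * I * (cc k : ℂ) / 2))‖ + ‖(1:ℂ)‖ := norm_sub_le _ _
        _ = 2 := by rw [hE1 k]; simp; norm_num
    calc ‖term s k * (Complex.exp (-((τ:ℂ) * I * (cc k : ℂ) / 2)) - 1)‖
        = ‖term s k‖ * ‖Complex.exp (-((τ:ℂ) * I * (cc k : ℂ) / 2)) - 1‖ := norm_mul _ _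
      _ ≤ ρ ^ (k+1) * 2 := by
          apply mul_le_mul (norm_term_le ha.le hs k) h2 (norm_nonneg _) (by positivity)
      _ = 2 * ρ ^ (k+1) := by ring
  have hsum_d : Summable (fun k => ‖d k‖) :=
    Summable.of_nonneg_of_le (fun k => norm_nonneg _) hnorm_d (hCsum.mul_left 2)
  have hhead : ∀ k < N, ‖d k‖ ≤ 8 * Real.pi * δ := by
    intro k hk
    obtain ⟨n, hn⟩ := hsim k hk
    rw [hd]
    have h3 := norm_exp_factor hδ0 hn hδ1
    have h4 : ‖term s k‖ ≤ 1 := le_trans (norm_term_le ha.le hs k)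
      (pow_le_one₀ hρ0.le hρ1.le)
    calc ‖term s k * (Complex.exp (-((τ:ℂ) * I * (cc k : ℂ) / 2)) - 1)‖
        = ‖term s k‖ * ‖Complex.exp (-((τ:ℂ) * I * (cc k : ℂ) / 2)) - 1‖ := norm_mul _ _
      _ ≤ 1 * (8 * Real.pi * δ) := by
          apply mul_le_mul h4 h3 (norm_nonneg _) (by norm_num)
      _ = 8 * Real.pi * δ := by ring
  have hsum_tail : Summable (fun j => ‖d (j + N)‖) := (summable_nat_add_iff N).2 hsum_d
  have hsplit : ∑' k, ‖d k‖ = ∑ k ∈ Finset.range N, ‖d k‖ + ∑' j, ‖d (j + N)‖ :=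
    (Summable.sum_add_tsum_nat_add N hsum_d).symm
  have hhead_sum : ∑ k ∈ Finset.range N, ‖d k‖ ≤ N * (8 * Real.pi * δ) := by
    calc ∑ k ∈ Finset.range N, ‖d k‖ ≤ ∑ k ∈ Finset.range N, (8 * Real.pi * δ) :=
          Finset.sum_le_sum (fun k hk => hhead k (Finset.mem_range.1 hk))
      _ = N * (8 * Real.pi * δ) := by rw [Finset.sum_const, Finset.card_range]; ring
  have hgeom_tail : Summable (fun j : ℕ => (2 * ρ ^ N) * ρ ^ (j+1)) := hCsum.mul_left _
  have htail_sum : ∑' j, ‖d (j + N)‖ ≤ 2 * ρ ^ N * C := by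
    calc ∑' j, ‖d (j + N)‖ ≤ ∑' j : ℕ, (2 * ρ ^ N) * ρ ^ (j+1) := by
          apply Summable.tsum_le_tsum _ hsum_tail hgeom_tail
          intro j
          calc ‖d (j + N)‖ ≤ 2 * ρ ^ (j + N + 1) := hnorm_d (j + N)
            _ = (2 * ρ ^ N) * ρ ^ (j+1) := by
                rw [show j + N + 1 = N + (j + 1) by omega, pow_add]
                ring
      _ = 2 * ρ ^ N * C := by rw [tsum_mul_left, hC]
  have hfinal : ‖Qfun (s + (τ:ℂ)*I) - Qfun s‖ ≤ 2 * (∑' k, ‖d k‖) := by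
    rw [hdiff]
    rw [norm_mul]
    have := norm_tsum_le_tsum_norm hsum_d
    have h5 : ‖(-2 : ℂ)‖ = 2 := by norm_num
    rw [h5]
    nlinarith [norm_nonneg (∑' k, d k), tsum_nonneg (L := SummationFilter.unconditional ℕ) (fun k => norm_nonneg (d k))]
  have hδN : N * (8 * Real.pi * δ) ≤ ε / 8 := by
    have h6 : (0:ℝ) < 64*Real.pi*(N+1) := by positivity
    rw [le_div_iff₀ h6] at hδ2
    have h7 : (0:ℝ) ≤ N := Nat.cast_nonneg N
    nlinarith
  have hρN2 : 2 * ρ ^ N * C ≤ ε / 8 := by nlinarith [pow_pos hρ0 N]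
  calc ‖Qfun (s + (τ:ℂ)*I) - Qfun s‖ ≤ 2 * (∑' k, ‖d k‖) := hfinal
    _ ≤ 2 * (ε/8 + ε/8) := by
        rw [hsplit]
        have := add_le_add hhead_sum htail_sum
        nlinarith [le_trans this (add_le_add hδN hρN2)]
    _ < ε := by linarith

end StQ14

open StQ14 Complex Metric in
/-- the set of zeros of `Q` in the right half-plane is infinite. -/
theorem stmt_14 : {s : ℂ | 0 < s.re ∧ Qfun s = 0}.Infinite := by
  obtain ⟨σ₀, hIcc, hzero⟩ := exists_zero
  obtain ⟨hσl, hσr⟩ := hIcc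
  have hσpos : (0:ℝ) < σ₀ := by linarith
  set s₀ : ℂ := (σ₀ : ℂ) with hs₀
  set U : Set ℂ := {s : ℂ | (1:ℝ)/8 < s.re} with hU
  have hUopen : IsOpen U := isOpen_lt continuous_const Complex.continuous_re
  have hUdiff : DifferentiableOn ℂ Qfun U := diffOn_halfplane (by norm_num)
  have hAnal : AnalyticOnNhd ℂ Qfun U := hUdiff.analyticOnNhd hUopen
  have hs₀U : s₀ ∈ U := by
    simp only [hU, Set.mem_setOf_eq, hs₀, Complex.ofReal_re]
    linarith
  have h4ne : Qfun ((4:ℝ):ℂ) ≠ 0 := by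
    rw [Qfun_ofReal]
    exact_mod_cast Qr_four_pos.ne'
  -- isolated zeros: get a punctured neighborhood where Qfun ≠ 0
  have hiso : ∀ᶠ z in nhdsWithin s₀ {s₀}ᶜ, Qfun z ≠ 0 := by
    rcases (hAnal s₀ hs₀U).eventually_eq_zero_or_eventually_ne_zero with h | h
    · exfalso
      have hpre : IsPreconnected U := (convex_halfSpace_re_gt _).isPreconnected
      have := hAnal.eqOn_zero_of_preconnected_of_eventuallyEq_zero hpre hs₀U h
      have h4U : ((4:ℝ):ℂ) ∈ U := by
        simp only [hU, Set.mem_setOf_eq, Complex.ofReal_re]; norm_num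
      exact h4ne (this h4U)
    · exact h
  rw [eventually_nhdsWithin_iff, Metric.eventually_nhds_iff] at hiso
  obtain ⟨ε₀, hε₀, hball⟩ := hiso
  set r : ℝ := min (ε₀/2) (σ₀/4) with hrdef
  have hr0 : 0 < r := lt_min (by linarith) (by linarith)
  have hrε : r < ε₀ := lt_of_le_of_lt (min_le_left _ _) (by linarith)
  have hrσ : r ≤ σ₀/4 := min_le_right _ _
  have hre_ball : ∀ z ∈ closedBall s₀ r, σ₀ - r ≤ z.re := by
    intro z hz
    have h1 : dist z s₀ ≤ r := mem_closedBall.1 hz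
    have h2 : |(z - s₀).re| ≤ ‖z - s₀‖ := Complex.abs_re_le_norm _
    rw [Complex.dist_eq] at h1
    have h3 : (z - s₀).re = z.re - σ₀ := by simp [hs₀]
    rw [h3] at h2
    have := abs_le.1 (le_trans h2 h1)
    linarith [this.1]
  have hballU : closedBall s₀ r ⊆ U := by
    intro z hz
    have := hre_ball z hz
    simp only [hU, Set.mem_setOf_eq]
    linarith
  -- minimum of ‖Qfun‖ on the sphere
  have hsphere_ne : ∀ z ∈ sphere s₀ r, Qfun z ≠ 0 := by
    intro z hz
    have h1 : dist z s₀ = r := mem_sphere.1 hz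
    refine hball (by rw [h1]; exact hrε) ?_
    intro hzs
    rw [hzs] at h1
    simp at h1
    exact absurd h1.symm hr0.ne'
  have hsne : (sphere s₀ r).Nonempty := NormedSpace.sphere_nonempty.mpr hr0.le
  have hscont : ContinuousOn (fun z => ‖Qfun z‖) (sphere s₀ r) :=
    (hUdiff.continuousOn.mono (Set.Subset.trans sphere_subset_closedBall hballU)).norm
  obtain ⟨z₀, hz₀mem, hz₀min⟩ := (isCompact_sphere s₀ r).exists_isMinOn hsne hscont
  set m : ℝ := ‖Qfun z₀‖ with hm
  have hm0 : 0 < m := norm_pos_iff.2 (hsphere_ne z₀ hz₀mem)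
  -- claim: zeros with arbitrarily large imaginary part
  have claim : ∀ T : ℝ, 0 < T → ∃ s : ℂ, 0 < s.re ∧ Qfun s = 0 ∧ T < s.im := by
    intro T hT
    have har : 0 < σ₀ - r := by linarith
    obtain ⟨τ, hτge, htrans⟩ := key_translate har (by positivity : (0:ℝ) < m/3)
      (show (0:ℝ) < T + r + 1 by positivity)
    set g : ℂ → ℂ := fun s => Qfun (s + (τ:ℂ) * I) with hg
    have hgd : DifferentiableOn ℂ g U := by
      apply DifferentiableOn.comp hUdiff
      · exact (differentiable_id.add_const _).differentiableOn
      · intro z hz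
        simp only [hU, Set.mem_setOf_eq] at hz ⊢
        simpa using hz
    -- find a zero of g in the closed ball
    by_cases hgz : ∃ s ∈ closedBall s₀ r, g s = 0
    · obtain ⟨s, hsball, hgs⟩ := hgz
      refine ⟨s + (τ:ℂ) * I, ?_, hgs, ?_⟩
      · have := hre_ball s hsball
        simpa using (by linarith : (0:ℝ) < s.re)
      · have h1 : |s.im| ≤ r := by
          have h2 : |(s - s₀).im| ≤ ‖s - s₀‖ := Complex.abs_im_le_norm _
          have h3 : (s - s₀).im = s.im := by simp [hs₀]
          rw [h3] at h2
          have h4 : dist s s₀ ≤ r := mem_closedBall.1 hsball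
          rw [Complex.dist_eq] at h4
          linarith
        have h5 : (s + (τ:ℂ) * I).im = s.im + τ := by simp
        rw [h5]
        have := abs_le.1 h1
        linarith [this.1]
    · exfalso
      push_neg at hgz
      have hgne : ∀ s ∈ closedBall s₀ r, g s ≠ 0 := hgz
      have hinv : DiffContOnCl ℂ (fun s => (g s)⁻¹) (ball s₀ r) := by
        constructor
        · exact ((hgd.mono (Set.Subset.trans ball_subset_closedBall hballU)).inv
            (fun z hz => hgne z (ball_subset_closedBall hz)))
        · rw [closure_ball s₀ hr0.ne']
          exact ((hgd.continuousOn.mono hballU).inv₀ hgne)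
      have hmax := Complex.norm_le_of_forall_mem_frontier_norm_le isBounded_ball hinv
        (C := (2*m/3)⁻¹) ?_ (z := s₀) ?_
      · -- contradiction
        have hgs₀ : ‖g s₀‖ < m/3 := by
          have := htrans s₀ (by simp [hs₀]; linarith)
          rw [hzero] at this
          simpa [hg] using this
        have hgs₀ne : g s₀ ≠ 0 := hgne s₀ (mem_closedBall_self hr0.le)
        have h6 : ‖(g s₀)⁻¹‖ = ‖g s₀‖⁻¹ := norm_inv _
        rw [h6] at hmax
        have h7 : (0:ℝ) < ‖g s₀‖ := norm_pos_iff.2 hgs₀ne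
        have h8 : (2*m/3)⁻¹ < ‖g s₀‖⁻¹ := by
          apply inv_strictAnti₀ h7
          linarith
        linarith
      · -- frontier bound
        intro z hz
        rw [frontier_ball s₀ hr0.ne'] at hz
        have h9 : ‖Qfun (z + (τ:ℂ) * I) - Qfun z‖ < m/3 :=
          htrans z (hre_ball z (sphere_subset_closedBall hz))
        have h10 : m ≤ ‖Qfun z‖ := hz₀min hz
        have h11 : 2*m/3 ≤ ‖g z‖ := by
          have := norm_sub_norm_le (Qfun z) (Qfun z - g z)
          have h12 : ‖Qfun z - g z‖ < m/3 := by
            rw [← norm_neg]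
            simpa [hg, neg_sub] using h9
          have h13 : Qfun z - (Qfun z - g z) = g z := by ring
          rw [h13] at this
          linarith
        rw [norm_inv]
        apply inv_anti₀ (by linarith) h11
      · rw [closure_ball s₀ hr0.ne']
        exact mem_closedBall_self hr0.le
  -- conclude infinitude
  intro hfin
  have himfin : (Complex.im '' {s : ℂ | 0 < s.re ∧ Qfun s = 0}).Finite := hfin.image _
  obtain ⟨B, hB⟩ := himfin.bddAbove
  obtain ⟨s, hs1, hs2, hs3⟩ := claim (max B 0 + 1) (by positivity)
  have : s.im ≤ B := hB ⟨s, ⟨hs1, hs2⟩, rfl⟩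
  have : B ≤ max B 0 := le_max_left _ _
  linarith
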